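/- With W = G_0 ≀ G_1, Â = (A_0 × G_0^{ℓ−1}) ⋊ A_1, B̂ = B_0 ≀ B_1 as above: if G_0 = A_0B_0A_0 and G_1 = A_1B_1A_1, then W = ÂB̂Â. -/

import Mathlib

open scoped Pointwise

section Wreath

variable {G₀ G₁ : Type*} [Group G₀] [Group G₁]

/-- The automorphism of `(G₁ ⧸ A₁) → G₀` permuting coordinates by `σ`. -/
def wreathAut (G₀ : Type*) [Group G₀] {G₁ : Type*} [Group G₁] (A₁ : Subgroup G₁)
    (σ : G₁) : MulAut ((G₁ ⧸ A₁) → G₀) where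
  toFun f := fun x => f (σ⁻¹ • x)
  invFun f := fun x => f (σ • x)
  left_inv f := by funext x; simp
  right_inv f := by funext x; simp
  map_mul' f g := rfl

/-- The coordinate-permutation action of `G₁` on `(G₁ ⧸ A₁) → G₀`, as a
homomorphism into the automorphism group; this defines the wreath product
`G₀ ≀ G₁ = ((G₁ ⧸ A₁) → G₀) ⋊[wreathPhi G₀ A₁] G₁`. -/
def wreathPhi (G₀ : Type*) [Group G₀] {G₁ : Type*} [Group G₁] (A₁ : Subgroup G₁) :
    G₁ →* MulAut ((G₁ ⧸ A₁) → G₀) where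
  toFun := wreathAut G₀ A₁
  map_one' := by ext f x; simp [wreathAut]
  map_mul' σ τ := by ext f x; simp [wreathAut, mul_smul]

lemma wreath_smul_pt {A₁ : Subgroup G₁} {σ : G₁} (h : σ ∈ A₁) :
    σ • ((1 : G₁) : G₁ ⧸ A₁) = ((1 : G₁) : G₁ ⧸ A₁) := by
  rw [MulAction.Quotient.smul_mk]
  exact QuotientGroup.eq.mpr (by simpa using A₁.inv_mem h)

/-- The subgroup `Â = (A₀ × G₀^{ℓ-1}) ⋊ A₁` of the wreath product:
top component in `A₁`, and the coordinate at the base point `A₁ ∈ G₁ ⧸ A₁`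
in `A₀`. -/
def wreathAhat (A₀ : Subgroup G₀) (A₁ : Subgroup G₁) :
    Subgroup (((G₁ ⧸ A₁) → G₀) ⋊[wreathPhi G₀ A₁] G₁) where
  carrier := {w | w.right ∈ A₁ ∧ w.left ((1 : G₁) : G₁ ⧸ A₁) ∈ A₀}
  one_mem' := by
    refine ⟨A₁.one_mem, ?_⟩
    simp [SemidirectProduct.one_left]
  mul_mem' := by
    rintro a b ⟨ha1, ha2⟩ ⟨hb1, hb2⟩
    refine ⟨A₁.mul_mem ha1 hb1, ?_⟩
    rw [SemidirectProduct.mul_left]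
    have : (wreathPhi G₀ A₁ a.right) b.left ((1 : G₁) : G₁ ⧸ A₁)
        = b.left ((1 : G₁) : G₁ ⧸ A₁) := by
      show b.left (a.right⁻¹ • ((1 : G₁) : G₁ ⧸ A₁)) = _
      rw [wreath_smul_pt (A₁.inv_mem ha1)]
    rw [Pi.mul_apply, this]
    exact A₀.mul_mem ha2 hb2
  inv_mem' := by
    rintro a ⟨ha1, ha2⟩
    refine ⟨A₁.inv_mem ha1, ?_⟩
    rw [SemidirectProduct.inv_left]
    show a.left⁻¹ (a.right⁻¹⁻¹ • ((1 : G₁) : G₁ ⧸ A₁)) ∈ A₀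
    rw [inv_inv, wreath_smul_pt ha1, Pi.inv_apply]
    exact A₀.inv_mem ha2

/-- The subgroup `B̂ = B₀ ≀ B₁ = B₀^ℓ ⋊ B₁` of the wreath product. -/
def wreathBhat (B₀ : Subgroup G₀) (A₁ B₁ : Subgroup G₁) :
    Subgroup (((G₁ ⧸ A₁) → G₀) ⋊[wreathPhi G₀ A₁] G₁) where
  carrier := {w | w.right ∈ B₁ ∧ ∀ x, w.left x ∈ B₀}
  one_mem' := ⟨B₁.one_mem, fun x => by simp [SemidirectProduct.one_left]⟩
  mul_mem' := by
    rintro a b ⟨ha1, ha2⟩ ⟨hb1, hb2⟩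
    refine ⟨B₁.mul_mem ha1 hb1, fun x => ?_⟩
    rw [SemidirectProduct.mul_left, Pi.mul_apply]
    exact B₀.mul_mem (ha2 x) (hb2 _)
  inv_mem' := by
    rintro a ⟨ha1, ha2⟩
    refine ⟨B₁.inv_mem ha1, fun x => ?_⟩
    rw [SemidirectProduct.inv_left]
    show a.left⁻¹ (a.right⁻¹⁻¹ • x) ∈ B₀
    rw [Pi.inv_apply]
    exact B₀.inv_mem (ha2 _)

end Wreath

/-- Wreath products of triple factorisations: if `G₀ = A₀B₀A₀` and
`G₁ = A₁B₁A₁`, then `W = ÂB̂Â` in the wreath product `W = G₀ ≀ G₁`. -/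
theorem wreath_triple_factorisation
    {G₀ G₁ : Type*} [Group G₀] [Group G₁] [Fintype G₀] [Fintype G₁]
    (A₀ B₀ : Subgroup G₀) (A₁ B₁ : Subgroup G₁)
    (h0 : (A₀ : Set G₀) * (B₀ : Set G₀) * (A₀ : Set G₀) = Set.univ)
    (h1 : (A₁ : Set G₁) * (B₁ : Set G₁) * (A₁ : Set G₁) = Set.univ) :
    (wreathAhat A₀ A₁ : Set (((G₁ ⧸ A₁) → G₀) ⋊[wreathPhi G₀ A₁] G₁)) *
        (wreathBhat B₀ A₁ B₁ : Set (((G₁ ⧸ A₁) → G₀) ⋊[wreathPhi G₀ A₁] G₁)) *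
        (wreathAhat A₀ A₁ : Set (((G₁ ⧸ A₁) → G₀) ⋊[wreathPhi G₀ A₁] G₁)) =
      Set.univ := by
  apply Set.eq_univ_of_forall
  rintro ⟨f, σ⟩
  have hσ : σ ∈ (A₁ : Set G₁) * (B₁ : Set G₁) * (A₁ : Set G₁) := h1 ▸ Set.mem_univ σ
  rw [Set.mem_mul] at hσ
  obtain ⟨p, hp, a', ha', hpq⟩ := hσ
  rw [Set.mem_mul] at hp
  obtain ⟨a, ha, b, hb, rfl⟩ := hp
  have hf : ∀ x, ∃ α ∈ A₀, ∃ β ∈ B₀, ∃ γ ∈ A₀, α * β * γ = f x := by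
    intro x
    have hx : f x ∈ (A₀ : Set G₀) * (B₀ : Set G₀) * (A₀ : Set G₀) := h0 ▸ Set.mem_univ (f x)
    rw [Set.mem_mul] at hx
    obtain ⟨p, hp, γ, hγ, hpq⟩ := hx
    rw [Set.mem_mul] at hp
    obtain ⟨α, hα, β, hβ, rfl⟩ := hp
    exact ⟨α, hα, β, hβ, γ, hγ, hpq⟩
  choose α hα β hβ γ hγ hfx using hf
  refine Set.mem_mul.mpr ⟨_, Set.mem_mul.mpr
      ⟨(⟨α, a⟩ : ((G₁ ⧸ A₁) → G₀) ⋊[wreathPhi G₀ A₁] G₁), ⟨ha, hα _⟩,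
       (⟨fun y => β (a • y), b⟩ : ((G₁ ⧸ A₁) → G₀) ⋊[wreathPhi G₀ A₁] G₁),
         ⟨hb, fun y => hβ _⟩, rfl⟩,
      (⟨fun z => γ ((a * b) • z), a'⟩ : ((G₁ ⧸ A₁) → G₀) ⋊[wreathPhi G₀ A₁] G₁),
      ⟨ha', hγ _⟩, ?_⟩
  ext
  · rename_i x
    show α x * β (a • a⁻¹ • x) * γ ((a * b) • (a * b)⁻¹ • x) = f x
    rw [smul_inv_smul, smul_inv_smul]
    exact hfx x
  · exact hpq
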